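/- Let r ≥ ℓ−1 ≥ 1 and let k_1, …, k_r be positive integers. Among all K_ℓ-free subgraphs of the complete multipartite graph K_{k_1, …, k_r} with the maximum number of edges, there exists one, G, with the property that for every pair of distinct parts A_i, A_j of K_{k_1, …, k_r}, either every edge between A_i and A_j belongs to G or no edge between A_i and A_j belongs to G. -/

import Mathlib

open Finset

open scoped Classical in
/-- Twice the edge count, as a double sum of adjacency indicators. -/
noncomputable def mtbSS {r : ℕ} {k : Fin r → ℕ} (G : SimpleGraph (Σ i, Fin (k i))) : ℕ :=
  ∑ x, ∑ y, if G.Adj x y then 1 else 0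

/-- All vertices of part `j` are twins in `G`. -/
def mtbTwin {r : ℕ} {k : Fin r → ℕ} (G : SimpleGraph (Σ i, Fin (k i))) (j : Fin r) : Prop :=
  ∀ (a b : Fin (k j)) (x : Σ i, Fin (k i)), G.Adj ⟨j, a⟩ x ↔ G.Adj ⟨j, b⟩ x

lemma mtbSS_eq {r : ℕ} {k : Fin r → ℕ} (G : SimpleGraph (Σ i, Fin (k i))) :
    mtbSS G = 2 * G.edgeSet.ncard := by
  classical
  have h1 : mtbSS G = ∑ x, G.degree x := by
    unfold mtbSS
    refine Finset.sum_congr rfl fun x _ => ?_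
    rw [← Finset.card_filter, ← SimpleGraph.neighborFinset_eq_filter]
    rfl
  rw [h1, SimpleGraph.sum_degrees_eq_twice_card_edges,
    Set.ncard_eq_toFinset_card' G.edgeSet]
  congr 2

/-- Retraction collapsing part `i` onto its vertex `u`. -/
def mtbRho {r : ℕ} {k : Fin r → ℕ} (i : Fin r) (u : Fin (k i)) (x : Σ i, Fin (k i)) :
    Σ i, Fin (k i) :=
  if h : x.1 = i then ⟨i, u⟩ else x

lemma mtbRho_fst {r : ℕ} {k : Fin r → ℕ} (i : Fin r) (u : Fin (k i)) (x : Σ i, Fin (k i)) :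
    (mtbRho i u x).1 = x.1 := by
  unfold mtbRho; split <;> simp_all

lemma mtbRho_mk {r : ℕ} {k : Fin r → ℕ} (i : Fin r) (u : Fin (k i)) (a : Fin (k i)) :
    mtbRho i u ⟨i, a⟩ = ⟨i, u⟩ := by
  unfold mtbRho; simp

lemma mtbRho_mk_ne {r : ℕ} {k : Fin r → ℕ} (i : Fin r) (u : Fin (k i)) {j : Fin r}
    (hj : j ≠ i) (a : Fin (k j)) : mtbRho i u ⟨j, a⟩ = ⟨j, a⟩ := by
  unfold mtbRho; simp [hj]

lemma mtbSum_rho {r : ℕ} {k : Fin r → ℕ} (i : Fin r) (u : Fin (k i))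
    (g : (Σ i, Fin (k i)) → ℕ) :
    (∑ x, g (mtbRho i u x)) + ∑ a : Fin (k i), g ⟨i, a⟩
      = (∑ x, g x) + (k i) * g ⟨i, u⟩ := by
  rw [← Finset.univ_sigma_univ, Finset.sum_sigma, Finset.sum_sigma,
    ← Finset.sum_erase_add _ _ (Finset.mem_univ i),
    ← Finset.sum_erase_add _ (fun j => ∑ a : Fin (k j), g ⟨j, a⟩) (Finset.mem_univ i)]
  have h1 : ∑ j ∈ Finset.univ.erase i, ∑ a : Fin (k j), g (mtbRho i u ⟨j, a⟩)
      = ∑ j ∈ Finset.univ.erase i, ∑ a : Fin (k j), g ⟨j, a⟩ := by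
    refine Finset.sum_congr rfl fun j hj => Finset.sum_congr rfl fun a _ => ?_
    rw [mtbRho_mk_ne i u (Finset.mem_erase.1 hj).1 a]
  have h2 : ∑ a : Fin (k i), g (mtbRho i u ⟨i, a⟩) = (k i) * g ⟨i, u⟩ := by
    simp [mtbRho_mk, Finset.sum_const, mul_comm]
  rw [h1, h2]
  ring

lemma mtb_per_part {r ℓ : ℕ} {k : Fin r → ℕ} (G : SimpleGraph (Σ i, Fin (k i)))
    (hH : G ≤ SimpleGraph.completeMultipartiteGraph (fun i => Fin (k i)))
    (hcf : G.CliqueFree ℓ) (i : Fin r) (hki : 1 ≤ k i) :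
    ∃ G' : SimpleGraph (Σ i, Fin (k i)),
      G' ≤ SimpleGraph.completeMultipartiteGraph (fun i => Fin (k i)) ∧
      G'.CliqueFree ℓ ∧ mtbSS G ≤ mtbSS G' ∧ mtbTwin G' i ∧
      ∀ j, mtbTwin G j → mtbTwin G' j := by
  classical
  set d : (Σ i, Fin (k i)) → ℕ := fun x => ∑ y, if G.Adj x y then 1 else 0 with hd
  obtain ⟨u, -, hu⟩ := Finset.exists_max_image (Finset.univ : Finset (Fin (k i)))
      (fun a => d ⟨i, a⟩) ⟨⟨0, hki⟩, Finset.mem_univ _⟩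
  set ρ := mtbRho i u with hρ
  have hno : ∀ a b : Fin (k i), ¬ G.Adj ⟨i, a⟩ ⟨i, b⟩ := by
    intro a b h
    simpa [SimpleGraph.completeMultipartiteGraph] using hH h
  refine ⟨G.comap ρ, ?_, ?_, ?_, ?_, ?_⟩
  · intro x y h
    have h2 : (ρ x).1 ≠ (ρ y).1 := by
      simpa [SimpleGraph.completeMultipartiteGraph] using hH h
    simp only [SimpleGraph.completeMultipartiteGraph, SimpleGraph.comap_adj,
      SimpleGraph.top_adj]
    rwa [mtbRho_fst, mtbRho_fst] at h2
  · intro t ht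
    refine hcf (t.image ρ) ⟨?_, ?_⟩
    · rintro x' hx' y' hy' hne
      simp only [Finset.coe_image, Set.mem_image, Finset.mem_coe] at hx' hy'
      obtain ⟨x, hx, rfl⟩ := hx'
      obtain ⟨y, hy, rfl⟩ := hy'
      have hxy : x ≠ y := by rintro rfl; exact hne rfl
      exact ht.1 hx hy hxy
    · rw [Finset.card_image_of_injOn, ht.2]
      intro x hx y hy hxyρ
      by_contra hne
      have hadj : G.Adj (ρ x) (ρ y) := ht.1 hx hy hne
      rw [hxyρ] at hadj
      exact G.irrefl hadj
  · -- edge counting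
    obtain ⟨T, hT⟩ : ∃ T : (Σ i, Fin (k i)) → ℕ,
        T = fun x => ∑ y, if G.Adj x (ρ y) then 1 else 0 := ⟨_, rfl⟩
    have hstar : ∀ x, T x + (∑ b : Fin (k i), if G.Adj x ⟨i, b⟩ then 1 else 0)
        = d x + (k i) * (if G.Adj x ⟨i, u⟩ then 1 else 0) := by
      intro x
      rw [hT]
      exact mtbSum_rho i u (fun y => if G.Adj x y then 1 else 0)
    have hC : ∀ a : Fin (k i), T ⟨i, a⟩ = d ⟨i, a⟩ := by
      intro a
      have h := hstar ⟨i, a⟩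
      simpa [hno] using h
    have hsym : ∀ z, (∑ x, if G.Adj x z then 1 else 0) = d z := by
      intro z
      refine Finset.sum_congr rfl fun x _ => ?_
      rw [SimpleGraph.adj_comm]
    have hSGd : mtbSS G = ∑ x, d x := rfl
    have hSG' : mtbSS (G.comap ρ) = ∑ x, T (ρ x) := by rw [hT]; rfl
    have hA : mtbSS (G.comap ρ) + (∑ a : Fin (k i), d ⟨i, a⟩)
        = (∑ x, T x) + (k i) * d ⟨i, u⟩ := by
      have h := mtbSum_rho i u T
      rw [← hSG'] at h
      have h2 : (∑ a : Fin (k i), T ⟨i, a⟩) = ∑ a : Fin (k i), d ⟨i, a⟩ :=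
        Finset.sum_congr rfl fun a _ => hC a
      rw [h2, hC u] at h
      exact h
    have hswap : (∑ x, ∑ b : Fin (k i), if G.Adj x ⟨i, b⟩ then 1 else 0)
        = ∑ b : Fin (k i), d ⟨i, b⟩ := by
      rw [Finset.sum_comm]
      exact Finset.sum_congr rfl fun b _ => hsym ⟨i, b⟩
    have hB : (∑ x, T x) + (∑ b : Fin (k i), d ⟨i, b⟩)
        = mtbSS G + (k i) * d ⟨i, u⟩ := by
      have h : ∑ x, (T x + ∑ b : Fin (k i), if G.Adj x ⟨i, b⟩ then 1 else 0)
          = ∑ x, (d x + (k i) * if G.Adj x ⟨i, u⟩ then 1 else 0) :=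
        Finset.sum_congr rfl fun x _ => hstar x
      rw [Finset.sum_add_distrib, Finset.sum_add_distrib, ← Finset.mul_sum] at h
      rw [hswap, hsym ⟨i, u⟩] at h
      rw [hSGd]
      exact h
    have hbound : (∑ a : Fin (k i), d ⟨i, a⟩) ≤ (k i) * d ⟨i, u⟩ := by
      calc (∑ a : Fin (k i), d ⟨i, a⟩) ≤ ∑ _a : Fin (k i), d ⟨i, u⟩ :=
            Finset.sum_le_sum fun a _ => hu a (Finset.mem_univ a)
        _ = (k i) * d ⟨i, u⟩ := by simp [mul_comm]
    omega
  · intro a b x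
    simp only [SimpleGraph.comap_adj]
    rw [hρ, mtbRho_mk, mtbRho_mk]
  · intro j htw a b x
    by_cases hji : j = i
    · subst hji
      simp only [SimpleGraph.comap_adj]
      rw [hρ, mtbRho_mk, mtbRho_mk]
    · simp only [SimpleGraph.comap_adj]
      rw [hρ, mtbRho_mk_ne i u hji a, mtbRho_mk_ne i u hji b]
      exact htw a b (mtbRho i u x)

lemma mtb_iterate {r ℓ : ℕ} {k : Fin r → ℕ} (hk : ∀ i, 1 ≤ k i) (l : List (Fin r)) :
    ∀ G : SimpleGraph (Σ i, Fin (k i)),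
      G ≤ SimpleGraph.completeMultipartiteGraph (fun i => Fin (k i)) → G.CliqueFree ℓ →
      ∃ G' : SimpleGraph (Σ i, Fin (k i)),
        G' ≤ SimpleGraph.completeMultipartiteGraph (fun i => Fin (k i)) ∧
        G'.CliqueFree ℓ ∧ mtbSS G ≤ mtbSS G' ∧ (∀ j ∈ l, mtbTwin G' j) ∧
        ∀ j, mtbTwin G j → mtbTwin G' j := by
  induction l with
  | nil =>
    intro G h1 h2
    exact ⟨G, h1, h2, le_rfl, by simp, fun j h => h⟩
  | cons i l ih =>
    intro G h1 h2
    obtain ⟨G₁, p1, p2, pS, ptw, ppres⟩ := mtb_per_part G h1 h2 i (hk i)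
    obtain ⟨G', g1, g2, gS, gtw, gpres⟩ := ih G₁ p1 p2
    refine ⟨G', g1, g2, le_trans pS gS, ?_, fun j h => gpres j (ppres j h)⟩
    intro j hj
    rcases List.mem_cons.1 hj with h | h
    · subst h; exact gpres j ptw
    · exact gtw j h

/-- For `r ≥ ℓ - 1 ≥ 1` and positive part sizes `k_1, …, k_r`, among the
`K_ℓ`-free subgraphs of the complete multipartite graph `K_{k_1,…,k_r}` with the maximum
number of edges, there is one, `G`, such that for every pair of distinct parts `A_i, A_j`,
either all edges between `A_i` and `A_j` are in `G`, or none are. -/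
theorem multipartite_turan_blocks (r ℓ : ℕ) (hℓ : 2 ≤ ℓ) (hrℓ : ℓ - 1 ≤ r)
    (k : Fin r → ℕ) (hk : ∀ i, 1 ≤ k i) :
    ∃ G : SimpleGraph (Σ i, Fin (k i)),
      G ≤ SimpleGraph.completeMultipartiteGraph (fun i => Fin (k i)) ∧
      G.CliqueFree ℓ ∧
      (∀ G' : SimpleGraph (Σ i, Fin (k i)),
        G' ≤ SimpleGraph.completeMultipartiteGraph (fun i => Fin (k i)) → G'.CliqueFree ℓ →
        G'.edgeSet.ncard ≤ G.edgeSet.ncard) ∧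
      ∀ i j : Fin r, i ≠ j →
        (∀ (a : Fin (k i)) (b : Fin (k j)), G.Adj ⟨i, a⟩ ⟨j, b⟩) ∨
        (∀ (a : Fin (k i)) (b : Fin (k j)), ¬ G.Adj ⟨i, a⟩ ⟨j, b⟩) := by
  classical
  set 𝒮 : Set (SimpleGraph (Σ i, Fin (k i))) :=
    {G | G ≤ SimpleGraph.completeMultipartiteGraph (fun i => Fin (k i)) ∧ G.CliqueFree ℓ}
    with hSdef
  have hfin : 𝒮.Finite := Set.toFinite _
  have hne : 𝒮.Nonempty := ⟨⊥, bot_le, SimpleGraph.cliqueFree_bot hℓ⟩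
  obtain ⟨G₀, hG₀, hmax⟩ := Set.exists_max_image 𝒮 (fun G => mtbSS G) hfin hne
  obtain ⟨G', h1, h2, hS', htw, -⟩ := mtb_iterate hk (Finset.univ.toList) G₀ hG₀.1 hG₀.2
  refine ⟨G', h1, h2, ?_, ?_⟩
  · intro G'' hg1 hg2
    have hle : mtbSS G'' ≤ mtbSS G₀ := hmax G'' ⟨hg1, hg2⟩
    have h3 : mtbSS G'' ≤ mtbSS G' := le_trans hle hS'
    rw [mtbSS_eq, mtbSS_eq] at h3
    omega
  · intro i j hij
    have hti : mtbTwin G' i := htw i (by simp [Finset.mem_toList])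
    have htj : mtbTwin G' j := htw j (by simp [Finset.mem_toList])
    by_cases hadj : G'.Adj ⟨i, ⟨0, hk i⟩⟩ ⟨j, ⟨0, hk j⟩⟩
    · left
      intro a b
      have e1 : G'.Adj ⟨i, a⟩ ⟨j, ⟨0, hk j⟩⟩ := (hti a ⟨0, hk i⟩ _).2 hadj
      have e2 : G'.Adj ⟨j, b⟩ ⟨i, a⟩ := (htj b ⟨0, hk j⟩ _).2 e1.symm
      exact e2.symm
    · right
      intro a b hab
      apply hadj
      have e1 : G'.Adj ⟨j, ⟨0, hk j⟩⟩ ⟨i, a⟩ := (htj ⟨0, hk j⟩ b _).2 hab.symm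
      exact ((hti ⟨0, hk i⟩ a _).2 e1.symm)
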